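/- For every ε ∈ (0,1/32), every process on I_ε with Σ_{i ∈ I_ε} p_i^1 = 1, and every step t: if δ_{−,+}^t ≥ (1/(2B_ε)) · Σ_{j ∈ I_ε⁺} p_j^t and W_t ≥ 16 · ε · B_ε, then W_{t+1} ≤ (1 − 1/(9B_ε)) · W_t. -/

import Mathlib

/-- `B_ε := 2⌈log₂(1/ε)⌉ + 1`. -/
noncomputable def Bval (ε : ℝ) : ℤ := 2 * ⌈Real.logb 2 (1 / ε)⌉ + 1

/-- `I_ε`: the odd integers `i` with `-B_ε ≤ i ≤ B_ε`. -/
noncomputable def Iset (ε : ℝ) : Finset ℤ :=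
  (Finset.Icc (-(Bval ε)) (Bval ε)).filter (fun i => Odd i)

/-- `I_ε⁺ := I_ε ∩ {i > 0}`. -/
noncomputable def Ipos (ε : ℝ) : Finset ℤ := (Iset ε).filter (fun i => 0 < i)

/-- `I_ε⁻ := I_ε ∩ {i < 0}`. -/
noncomputable def Ineg (ε : ℝ) : Finset ℤ := (Iset ε).filter (fun i => i < 0)

/-- A process on `I_ε` (Definition 4 of the paper): at each step `t ≥ 1` and each `i ∈ I_ε`,
an amount `q t i` with `0 ≤ q t i ≤ p t i` of the weight `p t i` moves to position `i - 2`
and the remaining `p t i - q t i` moves to position `i + 2`, clamped to stay in `[-B_ε, B_ε]`;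
`p (t+1) i` is the total weight arriving at `i`.  Moreover:
(i) at every step at least `15/16` of the mass on `I_ε⁺` moves down, and
(ii) for every `i ∈ I_ε⁻` whose mass is at least `(1/B_ε⁴) Σ_{j ∈ I_ε⁺} p t j`,
at most `1/16` of the weight at `i` moves up. -/
structure MProcess (ε : ℝ) where
  p : ℕ → ℤ → ℝ
  q : ℕ → ℤ → ℝ
  q_nonneg : ∀ t i, 0 ≤ q t i
  q_le_p : ∀ t i, q t i ≤ p t i
  update : ∀ t, 1 ≤ t → ∀ i ∈ Iset ε,
    p (t + 1) i =
      (∑ j ∈ (Iset ε).filter (fun j => max (j - 2) (-(Bval ε)) = i), q t j) +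
      (∑ j ∈ (Iset ε).filter (fun j => min (j + 2) (Bval ε) = i), (p t j - q t j))
  mass_down : ∀ t, 1 ≤ t →
    (15 / 16 : ℝ) * ∑ i ∈ Ipos ε, p t i ≤ ∑ i ∈ Ipos ε, q t i
  up_small : ∀ t, 1 ≤ t → ∀ i ∈ Ineg ε,
    (1 / (Bval ε : ℝ) ^ 4) * (∑ j ∈ Ipos ε, p t j) ≤ p t i →
    p t i - q t i ≤ (1 / 16 : ℝ) * p t i

/-- `W_t := Σ_{i ∈ I_ε⁻} 2^i p_i^t + Σ_{i ∈ I_ε⁺} p_i^t`. -/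
noncomputable def Wfun (ε : ℝ) (P : MProcess ε) (t : ℕ) : ℝ :=
  (∑ i ∈ Ineg ε, (2 : ℝ) ^ i * P.p t i) + ∑ i ∈ Ipos ε, P.p t i

namespace StAux

lemma mem_Iset {ε : ℝ} {i : ℤ} :
    i ∈ Iset ε ↔ (-(Bval ε) ≤ i ∧ i ≤ Bval ε) ∧ Odd i := by
  simp [Iset, Finset.mem_Icc]

lemma odd_B {ε : ℝ} : Odd (Bval ε) := ⟨⌈Real.logb 2 (1 / ε)⌉, rfl⟩

lemma hB13 {ε : ℝ} (hε : ε ∈ Set.Ioo (0 : ℝ) (1 / 32)) : (13 : ℤ) ≤ Bval ε := by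
  obtain ⟨h0, h1⟩ := hε
  have h32 : (32 : ℝ) < 1 / ε := by
    rw [lt_div_iff₀ h0]; nlinarith
  have hlog : (5 : ℝ) < Real.logb 2 (1 / ε) := by
    have h2 : Real.logb 2 32 < Real.logb 2 (1 / ε) :=
      Real.logb_lt_logb (by norm_num) (by norm_num) h32
    have h32' : Real.logb 2 32 = 5 := by
      have h5 : (32 : ℝ) = (2:ℝ) ^ (5 : ℝ) := by
        rw [show (5:ℝ) = ((5:ℕ):ℝ) by norm_num, Real.rpow_natCast]; norm_num
      rw [h5, Real.logb_rpow (by norm_num) (by norm_num)]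
    linarith
  have : (5 : ℤ) < ⌈Real.logb 2 (1 / ε)⌉ := Int.lt_ceil.2 (by exact_mod_cast hlog)
  unfold Bval; omega

lemma two_zpow_negB_le {ε : ℝ} (hε : ε ∈ Set.Ioo (0 : ℝ) (1 / 32)) :
    (2 : ℝ) ^ (-(Bval ε)) ≤ ε ^ 2 / 2 := by
  obtain ⟨h0, h1⟩ := hε
  set L := Real.logb 2 (1 / ε) with hL
  have hceil : L ≤ (⌈L⌉ : ℝ) := Int.le_ceil L
  have h2L : (2 : ℝ) ^ L = 1 / ε := Real.rpow_logb (by norm_num) (by norm_num) (by positivity)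
  have hmono : (2 : ℝ) ^ L ≤ (2 : ℝ) ^ ((⌈L⌉ : ℤ) : ℝ) :=
    Real.rpow_le_rpow_of_exponent_le (by norm_num) (by exact_mod_cast hceil)
  rw [Real.rpow_intCast, h2L] at hmono
  have hx : (1:ℝ) ≤ (2:ℝ) ^ (⌈L⌉ : ℤ) * ε := by
    rw [div_le_iff₀ h0] at hmono; linarith
  have hexp : (2 : ℝ) ^ (Bval ε) = 2 * ((2:ℝ) ^ (⌈L⌉ : ℤ))^2 := by
    rw [show Bval ε = ⌈L⌉ + ⌈L⌉ + 1 by unfold Bval; rw [← hL]; ring]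
    rw [zpow_add₀ (by norm_num : (2:ℝ) ≠ 0), zpow_add₀ (by norm_num : (2:ℝ) ≠ 0), zpow_one]
    ring
  have hB2 : (2:ℝ) ≤ (2:ℝ) ^ (Bval ε) * ε ^ 2 := by
    rw [hexp]
    nlinarith [mul_le_mul hx hx zero_le_one (by positivity : (0:ℝ) ≤ (2:ℝ) ^ (⌈L⌉ : ℤ) * ε)]
  have hBpos : (0:ℝ) < (2 : ℝ) ^ (Bval ε) := by positivity
  rw [zpow_neg, inv_le_comm₀ hBpos (by positivity : (0:ℝ) < ε^2/2)]
  rw [show (ε^2/2)⁻¹ = 2/ε^2 by field_simp]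
  rw [div_le_iff₀ (by positivity : (0:ℝ) < ε^2)]
  linarith

lemma maps_to_max {ε : ℝ} (hB : (1:ℤ) ≤ Bval ε) {j : ℤ} (hj : j ∈ Iset ε) :
    max (j - 2) (-(Bval ε)) ∈ Iset ε := by
  rw [mem_Iset] at *
  obtain ⟨⟨h1, h2⟩, h3⟩ := hj
  refine ⟨⟨le_max_right _ _, max_le (by omega) (by omega)⟩, ?_⟩
  rcases max_cases (j - 2) (-(Bval ε)) with ⟨he, _⟩ | ⟨he, _⟩
  · rw [he]; obtain ⟨m, hm⟩ := h3; exact ⟨m - 1, by omega⟩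
  · rw [he]; exact (odd_B (ε := ε)).neg

lemma maps_to_min {ε : ℝ} (hB : (1:ℤ) ≤ Bval ε) {j : ℤ} (hj : j ∈ Iset ε) :
    min (j + 2) (Bval ε) ∈ Iset ε := by
  rw [mem_Iset] at *
  obtain ⟨⟨h1, h2⟩, h3⟩ := hj
  refine ⟨⟨le_min (by omega) (by omega), min_le_right _ _⟩, ?_⟩
  rcases min_cases (j + 2) (Bval ε) with ⟨he, _⟩ | ⟨he, _⟩
  · rw [he]; obtain ⟨m, hm⟩ := h3; exact ⟨m + 1, by omega⟩
  · rw [he]; exact odd_B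

lemma transfer {ε : ℝ} (hB : (1:ℤ) ≤ Bval ε) (P : MProcess ε) (t : ℕ) (ht : 1 ≤ t)
    (w : ℤ → ℝ) :
    ∑ i ∈ Iset ε, w i * P.p (t + 1) i =
      ∑ j ∈ Iset ε, (w (max (j - 2) (-(Bval ε))) * P.q t j +
        w (min (j + 2) (Bval ε)) * (P.p t j - P.q t j)) := by
  calc ∑ i ∈ Iset ε, w i * P.p (t + 1) i
      = ∑ i ∈ Iset ε,
          ((∑ j ∈ (Iset ε).filter (fun j => max (j - 2) (-(Bval ε)) = i), w i * P.q t j) +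
           (∑ j ∈ (Iset ε).filter (fun j => min (j + 2) (Bval ε) = i), w i * (P.p t j - P.q t j))) := by
        refine Finset.sum_congr rfl (fun i hi => ?_)
        rw [P.update t ht i hi, mul_add, Finset.mul_sum, Finset.mul_sum]
    _ = (∑ i ∈ Iset ε, ∑ j ∈ (Iset ε).filter (fun j => max (j - 2) (-(Bval ε)) = i),
            w (max (j - 2) (-(Bval ε))) * P.q t j) +
        (∑ i ∈ Iset ε, ∑ j ∈ (Iset ε).filter (fun j => min (j + 2) (Bval ε) = i),
            w (min (j + 2) (Bval ε)) * (P.p t j - P.q t j)) := by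
        rw [Finset.sum_add_distrib]
        congr 1 <;>
        · refine Finset.sum_congr rfl (fun i _ => Finset.sum_congr rfl (fun j hj => ?_))
          rw [(Finset.mem_filter.1 hj).2]
    _ = _ := by
        rw [Finset.sum_fiberwise_of_maps_to (fun j hj => maps_to_max hB hj),
            Finset.sum_fiberwise_of_maps_to (fun j hj => maps_to_min hB hj),
            ← Finset.sum_add_distrib]

lemma split {ε : ℝ} (g : ℤ → ℝ) :
    ∑ i ∈ Iset ε, g i = ∑ i ∈ Ineg ε, g i + ∑ i ∈ Ipos ε, g i := by
  rw [← Finset.sum_filter_add_sum_filter_not (Iset ε) (fun i => i < 0) g]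
  congr 1
  apply Finset.sum_congr _ (fun _ _ => rfl)
  apply Finset.filter_congr
  intro i hi
  have hodd : Odd i := (mem_Iset.1 hi).2
  have : i ≠ 0 := by obtain ⟨m, hm⟩ := hodd; omega
  simp only [not_lt]
  constructor
  · intro h; omega
  · intro h; omega

lemma mass {ε : ℝ} (hB : (1:ℤ) ≤ Bval ε) (P : MProcess ε)
    (h1 : (∑ i ∈ Iset ε, P.p 1 i) = 1) :
    ∀ t : ℕ, 1 ≤ t → (∑ i ∈ Iset ε, P.p t i) = 1 := by
  intro t ht
  induction t, ht using Nat.le_induction with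
  | base => exact h1
  | succ n hn ih =>
    have := transfer hB P n hn (fun _ => 1)
    simp only [one_mul] at this
    rw [this]
    rw [← ih]
    exact Finset.sum_congr rfl (fun j _ => by ring)

/-- the weight function -/
noncomputable def wt : ℤ → ℝ := fun i => if i < 0 then (2:ℝ) ^ i else 1

lemma wt_nonneg (i : ℤ) : 0 ≤ wt i := by
  unfold wt; split_ifs
  · positivity
  · norm_num

lemma wt_le_one (i : ℤ) : wt i ≤ 1 := by
  unfold wt; split_ifs with h
  · exact zpow_le_one_of_nonpos₀ (by norm_num) (by omega)
  · exact le_refl 1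

lemma wt_of_neg {i : ℤ} (h : i < 0) : wt i = (2:ℝ) ^ i := if_pos h

lemma wt_of_pos {i : ℤ} (h : 0 < i) : wt i = 1 := if_neg (by omega)

lemma W_eq {ε : ℝ} (P : MProcess ε) (t : ℕ) :
    Wfun ε P t = ∑ i ∈ Iset ε, wt i * P.p t i := by
  rw [split (fun i => wt i * P.p t i)]
  unfold Wfun
  congr 1
  · refine Finset.sum_congr rfl (fun i hi => ?_)
    rw [wt_of_neg (Finset.mem_filter.1 hi).2]
  · refine Finset.sum_congr rfl (fun i hi => ?_)
    rw [wt_of_pos (Finset.mem_filter.1 hi).2, one_mul]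

end StAux

open StAux

set_option maxHeartbeats 1000000

/-- Case 1 of the proof of Lemma 3: if at step `t` the mass `δ_{-,+}^t`
moving from `-1` to `+1` is at least `(1/(2B_ε)) Σ_{j ∈ I_ε⁺} p_j^t` and `W_t ≥ 16 ε B_ε`, then
`W_{t+1} ≤ (1 - 1/(9B_ε)) W_t`. -/
theorem stmt2 :
    ∀ ε : ℝ, ε ∈ Set.Ioo (0 : ℝ) (1 / 32) →
      ∀ P : MProcess ε, (∑ i ∈ Iset ε, P.p 1 i) = 1 →
        ∀ t : ℕ, 1 ≤ t →
          (1 / (2 * (Bval ε : ℝ))) * (∑ j ∈ Ipos ε, P.p t j) ≤ P.p t (-1) - P.q t (-1) →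
          16 * ε * (Bval ε : ℝ) ≤ Wfun ε P t →
          Wfun ε P (t + 1) ≤ (1 - 1 / (9 * (Bval ε : ℝ))) * Wfun ε P t := by
  
  intro ε hε P h1 t ht hδ hW
  obtain ⟨hε0, hε32⟩ := hε
  have hBZ : (13:ℤ) ≤ Bval ε := hB13 ⟨hε0, hε32⟩
  have hB1 : (1:ℤ) ≤ Bval ε := by omega
  set b : ℝ := (Bval ε : ℝ) with hbdef
  have hb : (13:ℝ) ≤ b := by rw [hbdef]; exact_mod_cast hBZ
  have hb0 : (0:ℝ) < b := by linarith
  set S := ∑ j ∈ Ipos ε, P.p t j with hSdef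
  set N := ∑ i ∈ Ineg ε, (2:ℝ)^i * P.p t i with hNdef
  have hp : ∀ s i, 0 ≤ P.p s i := fun s i => le_trans (P.q_nonneg s i) (P.q_le_p s i)
  have hpq : ∀ s i, 0 ≤ P.p s i - P.q s i := fun s i => sub_nonneg.2 (P.q_le_p s i)
  have hS : 0 ≤ S := Finset.sum_nonneg (fun i _ => hp t i)
  have hN : 0 ≤ N := Finset.sum_nonneg (fun i _ => mul_nonneg (by positivity) (hp t i))
  have hWt : Wfun ε P t = N + S := rfl
  have hm1I : (-1 : ℤ) ∈ Iset ε := mem_Iset.2 ⟨⟨by omega, by omega⟩, ⟨-1, by ring⟩⟩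
  have hm1 : (-1 : ℤ) ∈ Ineg ε := Finset.mem_filter.2 ⟨hm1I, by norm_num⟩
  have hmBI : (-(Bval ε)) ∈ Iset ε := mem_Iset.2 ⟨⟨le_refl _, by omega⟩, (odd_B).neg⟩
  have hmass := mass hB1 P h1 t ht
  have hpB1 : P.p t (-(Bval ε)) ≤ 1 := by
    rw [← hmass]
    exact Finset.single_le_sum (fun i _ => hp t i) hmBI
  have hb4 : (1 / b^4) * S ≤ P.p t (-1) := by
    have h1' : (1 / b^4) * S ≤ (1/(2*b)) * S := by
      apply mul_le_mul_of_nonneg_right _ hS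
      rw [div_le_div_iff₀ (by positivity) (by positivity)]
      nlinarith [hb, mul_pos hb0 hb0, mul_pos (mul_pos hb0 hb0) hb0]
    have h2' : P.p t (-1) - P.q t (-1) ≤ P.p t (-1) := by linarith [P.q_nonneg t (-1)]
    linarith [hδ]
  have hup1 : P.p t (-1) - P.q t (-1) ≤ (1/16) * P.p t (-1) := P.up_small t ht (-1) hm1 hb4
  have h8S : 8 * S ≤ b * P.p t (-1) := by
    have h2 : (1/(2*b)) * S ≤ (1/16) * P.p t (-1) := le_trans hδ hup1
    calc 8 * S = 16*b*((1/(2*b))*S) := by field_simp; ring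
      _ ≤ 16*b*((1/16) * P.p t (-1)) := mul_le_mul_of_nonneg_left h2 (by positivity)
      _ = b * P.p t (-1) := by ring
  set u : ℝ := b⁻¹ with hudef
  have hu0 : (0:ℝ) < u := by positivity
  have hbu : b * u = 1 := mul_inv_cancel₀ (ne_of_gt hb0)
  have hu13 : u ≤ 1/13 := by
    rw [hudef]
    rw [inv_le_comm₀ hb0 (by norm_num)]
    norm_num; linarith
  set F : ℤ → ℝ := fun j => wt (max (j - 2) (-(Bval ε))) * P.q t j +
       wt (min (j + 2) (Bval ε)) * (P.p t j - P.q t j) with hFdef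
  have hWt1 : Wfun ε P (t+1) = ∑ j ∈ Iset ε, F j := by
    rw [W_eq, transfer hB1 P t ht]
  have hsplit : ∑ j ∈ Iset ε, F j
      = (∑ j ∈ (Ineg ε).erase (-1), F j + F (-1)) + ∑ j ∈ Ipos ε, F j := by
    rw [split F, Finset.sum_erase_add _ _ hm1]
  have hpos : ∑ j ∈ Ipos ε, F j ≤ S := by
    apply Finset.sum_le_sum
    intro j _
    have e1 := mul_le_mul_of_nonneg_right (wt_le_one (max (j-2) (-(Bval ε)))) (P.q_nonneg t j)
    have e2 := mul_le_mul_of_nonneg_right (wt_le_one (min (j+2) (Bval ε))) (hpq t j)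
    simp only [one_mul] at e1 e2
    simp only [hFdef]
    linarith
  have hFm1 : F (-1) ≤ (3/16) * P.p t (-1) := by
    have hmax : max ((-1:ℤ) - 2) (-(Bval ε)) = -3 := max_eq_left (by omega)
    have hmin : min ((-1:ℤ) + 2) (Bval ε) = 1 := min_eq_left (by omega)
    simp only [hFdef, hmax, hmin]
    rw [wt_of_neg (by norm_num : (-3:ℤ) < 0), wt_of_pos (by norm_num : (0:ℤ) < 1)]
    rw [show ((2:ℝ)^(-3:ℤ)) = 1/8 by norm_num, one_mul]
    have := P.q_le_p t (-1)
    linarith [hup1, P.q_nonneg t (-1)]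
  have hkey : ∀ j ∈ (Ineg ε).erase (-1),
      F j ≤ (1/2) * ((2:ℝ)^j * P.p t j) + 2 * (1/b^4) * S
            + (if j = -(Bval ε) then (2:ℝ)^(-(Bval ε)) else 0) := by
    intro j hj
    have hjne : j ≠ -1 := (Finset.mem_erase.1 hj).1
    have hjneg : j ∈ Ineg ε := Finset.mem_of_mem_erase hj
    obtain ⟨hjI, hjlt⟩ := Finset.mem_filter.1 hjneg
    obtain ⟨⟨hjlb, hjub⟩, hjodd⟩ := mem_Iset.1 hjI
    obtain ⟨m, hm⟩ := hjodd
    obtain ⟨k, hk⟩ := odd_B (ε := ε)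
    have hj3 : j ≤ -3 := by omega
    have hmin : min (j + 2) (Bval ε) = j + 2 := min_eq_left (by omega)
    have hwmin : wt (j+2) = 4 * (2:ℝ)^j := by
      rw [wt_of_neg (by omega : j + 2 < 0), zpow_add₀ (by norm_num : (2:ℝ) ≠ 0)]
      norm_num [mul_comm]
    set x := (2:ℝ)^j with hxdef
    have hx0 : (0:ℝ) < x := by positivity
    have hxhalf : x ≤ 1/2 := by
      calc x ≤ (2:ℝ)^(-1:ℤ) := zpow_le_zpow_right₀ (by norm_num) (by omega)
        _ = 1/2 := by norm_num
    have hqj := P.q_nonneg t j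
    have hqpj := P.q_le_p t j
    have hpj := hp t j
    have hite : (0:ℝ) ≤ (if j = -(Bval ε) then (2:ℝ)^(-(Bval ε)) else 0) := by
      split_ifs
      · positivity
      · exact le_refl 0
    have hSb : (0:ℝ) ≤ 2*(1/b^4)*S := mul_nonneg (by positivity) hS
    by_cases hgood : (1 / b^4) * S ≤ P.p t j
    · have hups : P.p t j - P.q t j ≤ (1/16) * P.p t j := P.up_small t ht j hjneg hgood
      by_cases hjB : j = -(Bval ε)
      · have hmax : max (j-2) (-(Bval ε)) = -(Bval ε) := max_eq_right (by omega)
        have hw : wt (-(Bval ε)) = x := by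
          rw [wt_of_neg (by omega : -(Bval ε) < 0), hxdef, hjB]
        have h2B : (2:ℝ)^(-(Bval ε)) = x := by rw [hxdef, hjB]
        simp only [hFdef, hmax, hmin, hw, hwmin, if_pos hjB, h2B]
        have e1 : x * P.q t j ≤ x * P.p t j := mul_le_mul_of_nonneg_left hqpj hx0.le
        have e2 : x * (P.p t j - P.q t j) ≤ x * ((1/16) * P.p t j) :=
          mul_le_mul_of_nonneg_left hups hx0.le
        have e3 : x * P.p t j ≤ x * 1 :=
          mul_le_mul_of_nonneg_left (by rw [hjB]; exact hpB1) hx0.le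
        nlinarith [e1, e2, e3]
      · have hmax : max (j-2) (-(Bval ε)) = j - 2 := max_eq_left (by omega)
        have hw : wt (j-2) = (1/4) * x := by
          rw [wt_of_neg (by omega : j - 2 < 0), hxdef,
            show j - 2 = j + (-2) by ring, zpow_add₀ (by norm_num : (2:ℝ) ≠ 0)]
          norm_num [mul_comm]
        simp only [hFdef, hmax, hmin, hw, hwmin, if_neg hjB]
        have e1 : x * P.q t j ≤ x * P.p t j := mul_le_mul_of_nonneg_left hqpj hx0.le
        have e2 : x * (P.p t j - P.q t j) ≤ x * ((1/16) * P.p t j) :=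
          mul_le_mul_of_nonneg_left hups hx0.le
        nlinarith [e1, e2, mul_nonneg hx0.le hqj]
    · have hbad : P.p t j ≤ (1/b^4) * S := (not_le.1 hgood).le
      have hwmax_le : wt (max (j-2) (-(Bval ε))) ≤ x := by
        rw [wt_of_neg (max_lt (by omega) (by omega))]
        exact zpow_le_zpow_right₀ (by norm_num) (max_le (by omega) (by omega))
      have e4 : x * P.p t j ≤ (1/2) * ((1/b^4)*S) :=
        mul_le_mul hxhalf hbad hpj (by norm_num)
      have e5 : wt (max (j-2) (-(Bval ε))) * P.q t j ≤ x * P.q t j :=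
        mul_le_mul_of_nonneg_right hwmax_le hqj
      simp only [hFdef, hmin, hwmin]
      nlinarith [e4, e5, mul_nonneg hx0.le hqj, mul_nonneg hx0.le hpj, hite]
  -- sum the key bound
  have hconv : b * (2*(1/b^4)*S) = 2*S*u^3 := by
    rw [hudef]; field_simp
  have hsum_erase : ∑ j ∈ (Ineg ε).erase (-1), (2:ℝ)^j * P.p t j
      = N - (1/2) * P.p t (-1) := by
    have h : (∑ x ∈ (Ineg ε).erase (-1), (2:ℝ)^x * P.p t x) + (2:ℝ)^(-1:ℤ) * P.p t (-1) = N :=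
      Finset.sum_erase_add (Ineg ε) (fun i => (2:ℝ)^i * P.p t i) hm1
    rw [show ((2:ℝ)^(-1:ℤ)) = 1/2 by norm_num] at h
    linarith [h]
  have hcard : (((Ineg ε).erase (-1)).card : ℝ) ≤ b := by
    have hsub : Ineg ε ⊆ Finset.Icc (-(Bval ε)) (-1) := by
      intro i hi
      obtain ⟨hiI, hilt⟩ := Finset.mem_filter.1 hi
      obtain ⟨⟨l, uu⟩, _⟩ := mem_Iset.1 hiI
      exact Finset.mem_Icc.2 ⟨l, by omega⟩
    have h1' := Finset.card_le_card (Finset.Subset.trans (Finset.erase_subset (-1) (Ineg ε)) hsub)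
    have h2' : (Finset.Icc (-(Bval ε)) (-1)).card = (Bval ε).toNat := by
      rw [Int.card_Icc]; congr 1; omega
    rw [h2'] at h1'
    have h5 : (((Ineg ε).erase (-1)).card : ℝ) ≤ ((Bval ε).toNat : ℝ) := by exact_mod_cast h1'
    have h4' : ((Bval ε).toNat : ℝ) = b := by
      rw [hbdef]; exact_mod_cast Int.toNat_of_nonneg (by omega : (0:ℤ) ≤ Bval ε)
    linarith
  have herase : ∑ j ∈ (Ineg ε).erase (-1), F j ≤
      (1/2) * (N - (1/2) * P.p t (-1)) + 2*S*u^3 + ε^2/2 := by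
    calc ∑ j ∈ (Ineg ε).erase (-1), F j
        ≤ ∑ j ∈ (Ineg ε).erase (-1), ((1/2) * ((2:ℝ)^j * P.p t j) + 2*(1/b^4)*S
            + (if j = -(Bval ε) then (2:ℝ)^(-(Bval ε)) else 0)) := Finset.sum_le_sum hkey
      _ = (1/2) * (∑ j ∈ (Ineg ε).erase (-1), (2:ℝ)^j * P.p t j)
            + (((Ineg ε).erase (-1)).card : ℝ) * (2*(1/b^4)*S)
            + (∑ j ∈ (Ineg ε).erase (-1),
                if j = -(Bval ε) then (2:ℝ)^(-(Bval ε)) else 0) := by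
          simp only [Finset.sum_add_distrib, Finset.sum_const, nsmul_eq_mul, Finset.mul_sum]
      _ ≤ (1/2) * (N - (1/2) * P.p t (-1)) + 2*S*u^3 + ε^2/2 := by
          have hc1 : (((Ineg ε).erase (-1)).card : ℝ) * (2*(1/b^4)*S) ≤ 2*S*u^3 := by
            rw [← hconv]
            exact mul_le_mul_of_nonneg_right hcard (mul_nonneg (by positivity) hS)
          have hc2 : (∑ j ∈ (Ineg ε).erase (-1),
              if j = -(Bval ε) then (2:ℝ)^(-(Bval ε)) else 0) ≤ ε^2/2 := by
            rw [Finset.sum_ite_eq' ((Ineg ε).erase (-1)) (-(Bval ε))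
              (fun _ => (2:ℝ)^(-(Bval ε)))]
            split_ifs
            · exact two_zpow_negB_le ⟨hε0, hε32⟩
            · positivity
          rw [hsum_erase]
          linarith
  -- final arithmetic
  rw [hWt1, hsplit, hWt]
  have h9 : 1/(9*b) = u/9 := by rw [hudef]; field_simp
  rw [hbdef] at h9 ⊢
  rw [h9]
  have hP : 8*S*u ≤ P.p t (-1) := by
    have h := mul_le_mul_of_nonneg_right h8S hu0.le
    rw [show b * P.p t (-1) * u = (b*u) * P.p t (-1) by ring, hbu, one_mul] at h
    linarith
  have hW2 : 16*ε ≤ (N+S)*u := by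
    rw [hWt] at hW
    have h := mul_le_mul_of_nonneg_right hW hu0.le
    rw [show 16*ε*b*u = 16*ε*(b*u) by ring, hbu, mul_one] at h
    exact h
  have hE : ε^2/2 ≤ (N+S)*u/1024 := by
    have hsq : ε^2 ≤ (1/32)*ε := by nlinarith
    linarith
  have hA : 0 ≤ N/2 - N*u/9 - N*u/1024 := by
    have := mul_le_mul_of_nonneg_left hu13 hN
    linarith
  have hB2 : 0 ≤ S*u/2 - S*u/9 - 2*S*u^3 - S*u/1024 := by
    have hSu : 0 ≤ S*u := mul_nonneg hS hu0.le
    have hu2 : u^2 ≤ 1/169 := by nlinarith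
    nlinarith [mul_le_mul_of_nonneg_left hu2 hSu]
  linarith [herase, hFm1, hpos, hP, hE, hA, hB2]
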